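/- Let α be real with α²−16α+32 > 0 and α²−10α+9 > 0. Then the points U± = ( α(−α±√(α²−16α+32))/8 , α²(α−8∓√(α²−16α+32))/16 ) and V± = ( (−α²+4α−3±(α+1)√(α²−10α+9))/8 , (α³−7α²−α−9∓(α²−2α−3)√(α²−10α+9))/16 ) lie on E_α : Y²+(α−2)XY+αY = X³, and U₊ + U₋ = P and V₊ + V₋ = 2P where P = (α,α). -/

import Mathlib

open WeierstrassCurve

private lemma some_eq_some'' {F : Type*} [Field F] {W : WeierstrassCurve.Affine F}
    {x₁ y₁ x₂ y₂ : F} (hx : x₁ = x₂) (hy : y₁ = y₂)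
    (h₁ : W.Nonsingular x₁ y₁) (h₂ : W.Nonsingular x₂ y₂) :
    WeierstrassCurve.Affine.Point.some _ _ h₁ = WeierstrassCurve.Affine.Point.some _ _ h₂ := by
  subst hx; subst hy; rfl

/-- For real `α` (with `E_α` nonsingular) such that `α²−16α+32 > 0` and `α²−10α+9 > 0`,
the points `U±` and `V±` lie on `E_α : Y²+(α−2)XY+αY = X³` and satisfy
`U₊ + U₋ = P` and `V₊ + V₋ = 2P` where `P = (α,α)` and `2P = (0,0)`. -/
theorem U_V_points (α : ℝ) (hα0 : α ≠ 0) (hα1 : α ≠ -1)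
    (h16 : 0 < α ^ 2 - 16 * α + 32) (h10 : 0 < α ^ 2 - 10 * α + 9)
    (W : WeierstrassCurve.Affine ℝ)
    (hW : W = { a₁ := α - 2, a₂ := 0, a₃ := α, a₄ := 0, a₆ := 0 }) :
    ∃ (hUplus : W.Nonsingular (α * (-α + Real.sqrt (α ^ 2 - 16 * α + 32)) / 8)
        (α ^ 2 * (α - 8 - Real.sqrt (α ^ 2 - 16 * α + 32)) / 16))
      (hUminus : W.Nonsingular (α * (-α - Real.sqrt (α ^ 2 - 16 * α + 32)) / 8)
        (α ^ 2 * (α - 8 + Real.sqrt (α ^ 2 - 16 * α + 32)) / 16))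
      (hVplus : W.Nonsingular
        ((-α ^ 2 + 4 * α - 3 + (α + 1) * Real.sqrt (α ^ 2 - 10 * α + 9)) / 8)
        ((α ^ 3 - 7 * α ^ 2 - α - 9 - (α ^ 2 - 2 * α - 3) * Real.sqrt (α ^ 2 - 10 * α + 9)) / 16))
      (hVminus : W.Nonsingular
        ((-α ^ 2 + 4 * α - 3 - (α + 1) * Real.sqrt (α ^ 2 - 10 * α + 9)) / 8)
        ((α ^ 3 - 7 * α ^ 2 - α - 9 + (α ^ 2 - 2 * α - 3) * Real.sqrt (α ^ 2 - 10 * α + 9)) / 16))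
      (hP : W.Nonsingular α α) (h2P : W.Nonsingular 0 0),
      WeierstrassCurve.Affine.Point.some _ _ hUplus + WeierstrassCurve.Affine.Point.some _ _ hUminus =
        WeierstrassCurve.Affine.Point.some _ _ hP ∧
      WeierstrassCurve.Affine.Point.some _ _ hVplus + WeierstrassCurve.Affine.Point.some _ _ hVminus =
        WeierstrassCurve.Affine.Point.some _ _ h2P := by
  subst hW
  set s := Real.sqrt (α ^ 2 - 16 * α + 32) with hs_def
  set t := Real.sqrt (α ^ 2 - 10 * α + 9) with ht_def
  have hs2 : s ^ 2 = α ^ 2 - 16 * α + 32 := Real.sq_sqrt h16.le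
  have ht2 : t ^ 2 = α ^ 2 - 10 * α + 9 := Real.sq_sqrt h10.le
  have hs0 : 0 < s := Real.sqrt_pos.mpr h16
  have ht0 : 0 < t := Real.sqrt_pos.mpr h10
  have hα8 : α - 8 ≠ 0 := by intro h; nlinarith
  set W : WeierstrassCurve.Affine ℝ :=
    { a₁ := α - 2, a₂ := 0, a₃ := α, a₄ := 0, a₆ := 0 } with hW
  have hΔ : W.Δ ≠ 0 := by
    have : W.Δ = α ^ 3 * (α + 1) ^ 2 * (α - 8) := by
      simp only [hW, WeierstrassCurve.Δ, WeierstrassCurve.b₂, WeierstrassCurve.b₄,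
        WeierstrassCurve.b₆, WeierstrassCurve.b₈]
      ring
    rw [this]
    exact mul_ne_zero (mul_ne_zero (pow_ne_zero 3 hα0)
      (pow_ne_zero 2 (fun h => hα1 (by linarith)))) hα8
  have ns : ∀ x y : ℝ, W.Equation x y → W.Nonsingular x y := fun x y h =>
    (WeierstrassCurve.Affine.equation_iff_nonsingular_of_Δ_ne_zero (W := W) hΔ).mp h
  have hUp : W.Nonsingular (α * (-α + s) / 8) (α ^ 2 * (α - 8 - s) / 16) := by
    apply ns; rw [WeierstrassCurve.Affine.equation_iff]
    linear_combination (α ^ 3 / 64 - α ^ 3 * s / 512 + α ^ 4 / 512) * hs2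
  have hUm : W.Nonsingular (α * (-α - s) / 8) (α ^ 2 * (α - 8 + s) / 16) := by
    apply ns; rw [WeierstrassCurve.Affine.equation_iff]
    linear_combination (α ^ 3 / 64 + α ^ 3 * s / 512 + α ^ 4 / 512) * hs2
  have hVp : W.Nonsingular ((-α ^ 2 + 4 * α - 3 + (α + 1) * t) / 8)
      ((α ^ 3 - 7 * α ^ 2 - α - 9 - (α ^ 2 - 2 * α - 3) * t) / 16) := by
    apply ns; rw [WeierstrassCurve.Affine.equation_iff]
    linear_combination (3 / 512 - t / 512 + α / 256 - 3 * α * t / 512 - α ^ 2 / 128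
      - 3 * α ^ 2 * t / 512 - α ^ 3 / 256 - α ^ 3 * t / 512 + α ^ 4 / 512) * ht2
  have hVm : W.Nonsingular ((-α ^ 2 + 4 * α - 3 - (α + 1) * t) / 8)
      ((α ^ 3 - 7 * α ^ 2 - α - 9 + (α ^ 2 - 2 * α - 3) * t) / 16) := by
    apply ns; rw [WeierstrassCurve.Affine.equation_iff]
    linear_combination (3 / 512 + t / 512 + α / 256 + 3 * α * t / 512 - α ^ 2 / 128
      + 3 * α ^ 2 * t / 512 - α ^ 3 / 256 + α ^ 3 * t / 512 + α ^ 4 / 512) * ht2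
  have hPn : W.Nonsingular α α := by
    apply ns; rw [WeierstrassCurve.Affine.equation_iff]; ring
  have h2Pn : W.Nonsingular 0 0 := by
    apply ns; rw [WeierstrassCurve.Affine.equation_iff]; ring
  refine ⟨hUp, hUm, hVp, hVm, hPn, h2Pn, ?_, ?_⟩
  · have hx : α * (-α + s) / 8 ≠ α * (-α - s) / 8 := by
      intro h
      apply hα0
      have : α * s / 4 = 0 := by linarith [sub_eq_zero.mpr h]
      rcases mul_eq_zero.mp (by linarith : α * s = 0) with h' | h'
      · exact h'
      · exact absurd h' hs0.ne'
    rw [WeierstrassCurve.Affine.Point.add_of_X_ne hx]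
    have hsl : W.slope (α * (-α + s) / 8) (α * (-α - s) / 8)
        (α ^ 2 * (α - 8 - s) / 16) (α ^ 2 * (α - 8 + s) / 16) = -α / 2 := by
      rw [WeierstrassCurve.Affine.slope_of_X_ne hx, div_eq_iff (sub_ne_zero.mpr hx)]
      ring
    apply some_eq_some'' <;> rw [hsl] <;>
      simp only [WeierstrassCurve.Affine.addX, WeierstrassCurve.Affine.addY,
        WeierstrassCurve.Affine.negAddY, WeierstrassCurve.Affine.negY, hW] <;> ring
  · have hx : (-α ^ 2 + 4 * α - 3 + (α + 1) * t) / 8 ≠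
        (-α ^ 2 + 4 * α - 3 - (α + 1) * t) / 8 := by
      intro h
      have h1 : (α + 1) * t / 4 = 0 := by linarith [sub_eq_zero.mpr h]
      rcases mul_eq_zero.mp (by linarith : (α + 1) * t = 0) with h' | h'
      · exact hα1 (by linarith)
      · exact absurd h' ht0.ne'
    rw [WeierstrassCurve.Affine.Point.add_of_X_ne hx]
    have hsl : W.slope ((-α ^ 2 + 4 * α - 3 + (α + 1) * t) / 8)
        ((-α ^ 2 + 4 * α - 3 - (α + 1) * t) / 8)
        ((α ^ 3 - 7 * α ^ 2 - α - 9 - (α ^ 2 - 2 * α - 3) * t) / 16)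
        ((α ^ 3 - 7 * α ^ 2 - α - 9 + (α ^ 2 - 2 * α - 3) * t) / 16) = -(α - 3) / 2 := by
      rw [WeierstrassCurve.Affine.slope_of_X_ne hx, div_eq_iff (sub_ne_zero.mpr hx)]
      ring
    apply some_eq_some'' <;> rw [hsl] <;>
      simp only [WeierstrassCurve.Affine.addX, WeierstrassCurve.Affine.addY,
        WeierstrassCurve.Affine.negAddY, WeierstrassCurve.Affine.negY, hW] <;> ring
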